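/- Let V and W be complex vector spaces, N ≥ 1, and Π_0, …, Π_N : V → W linear maps. Let κ : ℤ → V and x : ℤ → W be sequences with κ_j = 0 for all j ≤ 0, satisfying Π_l κ_j = x_{j−l} for all l ∈ {0, …, N} and all j ∈ ℤ. Let b_0, b_1, …, b_N be complex numbers with b_1 ≠ 0, and set P = Σ_{l=0}^N b_l Π_l and Q = Σ_{l=1}^N b_l Π_{l−1}. Then: (i) P κ_{j+1} − Q κ_j = b_0 x_{j+1} for every j ∈ ℤ; and (ii) for every j ∈ ℤ there exists f_j in the linear span of {κ_m : m ∈ ℤ} with Q f_j = b_0 x_j (one may take f_j = 0 for j ≤ 0 and f_j = (b_0/b_1) κ_j − (1/b_1) Σ_{i=1}^{N−1} b_{i+1} f_{j−i} for j ≥ 1). Consequently, every vector b_0 x_{j+1} = P κ_{j+1} − Q κ_j lies both in the image of P and in the image of Q, i.e. the corresponding vector fields are bihamiltonian with respect to the pair (P, Q). -/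

import Mathlib

/-- Abstract bihamiltonian recursion lemma. Given linear maps `Π_0, …, Π_N : V → W`,
sequences `κ : ℤ → V` (vanishing for `j ≤ 0`) and `x : ℤ → W` with
`Π_l κ_j = x_{j−l}` for all `0 ≤ l ≤ N` and all `j`, scalars `b_0, …, b_N` with
`b_1 ≠ 0`, and `P = Σ_{l=0}^N b_l Π_l`, `Q = Σ_{l=1}^N b_l Π_{l−1}`, then:
(i) `P κ_{j+1} − Q κ_j = b_0 x_{j+1}` for all `j`;
(ii) for every `j` there exists `f` in the span of the `κ_m` with `Q f = b_0 x_j`;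
consequently every `b_0 x_{j+1}` lies both in the image of `P` and in the image of `Q`. -/
theorem stmt10 (V W : Type*) [AddCommGroup V] [Module ℂ V] [AddCommGroup W] [Module ℂ W]
    (N : ℕ) (hN : 1 ≤ N) (Pl : ℕ → V →ₗ[ℂ] W) (κ : ℤ → V) (x : ℤ → W)
    (hκ : ∀ j : ℤ, j ≤ 0 → κ j = 0)
    (hrel : ∀ l : ℕ, l ≤ N → ∀ j : ℤ, Pl l (κ j) = x (j - (l : ℤ)))
    (b : ℕ → ℂ) (hb1 : b 1 ≠ 0)
    (P Q : V →ₗ[ℂ] W)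
    (hP : P = ∑ l ∈ Finset.range (N + 1), b l • Pl l)
    (hQ : Q = ∑ l ∈ Finset.Icc 1 N, b l • Pl (l - 1)) :
    (∀ j : ℤ, P (κ (j + 1)) - Q (κ j) = b 0 • x (j + 1))
    ∧ (∀ j : ℤ, ∃ f ∈ Submodule.span ℂ (Set.range κ), Q f = b 0 • x j)
    ∧ (∀ j : ℤ, b 0 • x (j + 1) ∈ LinearMap.range P ∧ b 0 • x (j + 1) ∈ LinearMap.range Q) := by
  -- `x` vanishes at nonpositive indices
  have hx0 : ∀ j : ℤ, j ≤ 0 → x j = 0 := by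
    intro j hj
    have h := hrel 0 (Nat.zero_le N) j
    rw [hκ j hj] at h
    simpa using h.symm
  have hPκ : ∀ j : ℤ, P (κ j) = ∑ l ∈ Finset.range (N + 1), b l • x (j - l) := by
    intro j
    rw [hP]
    simp only [LinearMap.sum_apply, LinearMap.smul_apply]
    refine Finset.sum_congr rfl fun l hl => ?_
    rw [hrel l (Nat.lt_succ_iff.mp (Finset.mem_range.mp hl)) j]
  have hQκ : ∀ j : ℤ, Q (κ j) = ∑ i ∈ Finset.range N, b (i + 1) • x (j - i) := by
    intro j
    rw [hQ]
    simp only [LinearMap.sum_apply, LinearMap.smul_apply]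
    rw [← Finset.Ico_add_one_right_eq_Icc, Finset.sum_Ico_eq_sum_range]
    refine Finset.sum_congr (by congr 1) fun i hi => ?_
    have hiN : i < N := by
      have := Finset.mem_range.mp hi; omega
    rw [Nat.add_comm 1 i]
    simp only [Nat.add_sub_cancel]
    rw [hrel i hiN.le j]
  -- Part (i)
  have part1 : ∀ j : ℤ, P (κ (j + 1)) - Q (κ j) = b 0 • x (j + 1) := by
    intro j
    rw [hPκ, hQκ, Finset.sum_range_succ']
    have hc : ∀ i ∈ Finset.range N,
        b (i + 1) • x (j + 1 - ((i : ℤ) + 1)) = b (i + 1) • x (j - i) := by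
      intro i _; congr 1; ring
    have : (∑ i ∈ Finset.range N, b (i + 1) • x (j + 1 - ((i + 1 : ℕ) : ℤ)))
        = ∑ i ∈ Finset.range N, b (i + 1) • x (j - i) := by
      refine Finset.sum_congr rfl fun i hi => ?_
      push_cast
      exact hc i hi
    rw [this]
    simp only [Nat.cast_zero, sub_zero]
    abel
  -- Part (ii) via strong recursion
  obtain ⟨M, rfl⟩ : ∃ M, N = M + 1 := ⟨N - 1, by omega⟩
  have hQκ' : ∀ j : ℤ, Q (κ j)
      = b 1 • x j + ∑ i ∈ Finset.range M, b (i + 2) • x (j - (i + 1)) := by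
    intro j
    rw [hQκ j, Finset.sum_range_succ']
    have : (∑ i ∈ Finset.range M, b (i + 1 + 1) • x (j - ((i + 1 : ℕ) : ℤ)))
        = ∑ i ∈ Finset.range M, b (i + 2) • x (j - (i + 1)) := by
      refine Finset.sum_congr rfl fun i hi => ?_
      push_cast
      ring_nf
    rw [this]
    simp only [Nat.cast_zero, sub_zero]
    abel
  have key : ∀ n : ℕ, ∀ j : ℤ, j ≤ n →
      ∃ f ∈ Submodule.span ℂ (Set.range κ), Q f = b 0 • x j := by
    intro n
    induction n with
    | zero =>
        intro j hj
        refine ⟨0, Submodule.zero_mem _, ?_⟩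
        rw [hx0 j (by exact_mod_cast hj)]
        simp
    | succ n ih =>
        intro j hj
        by_cases hjn : j ≤ n
        · exact ih j hjn
        · have hj' : j = n + 1 := by omega
          choose g hg1 hg2 using fun i : ℕ => ih (j - (i + 1)) (by omega)
          refine ⟨(b 0 / b 1) • κ j
              - (b 1)⁻¹ • ∑ i ∈ Finset.range M, b (i + 2) • g i, ?_, ?_⟩
          · refine Submodule.sub_mem _ ?_ ?_
            · exact Submodule.smul_mem _ _ (Submodule.subset_span ⟨j, rfl⟩)
            · exact Submodule.smul_mem _ _ (Submodule.sum_mem _ fun i _ =>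
                Submodule.smul_mem _ _ (hg1 i))
          · rw [map_sub, map_smul, map_smul, map_sum, hQκ' j]
            have : (∑ i ∈ Finset.range M, Q (b (i + 2) • g i))
                = ∑ i ∈ Finset.range M, b (i + 2) • (b 0 • x (j - (i + 1))) := by
              refine Finset.sum_congr rfl fun i _ => ?_
              rw [map_smul, hg2 i]
            rw [this]
            rw [smul_add, smul_smul, div_mul_cancel₀ _ hb1]
            rw [Finset.smul_sum, Finset.smul_sum]
            have : (∑ i ∈ Finset.range M, (b 1)⁻¹ • b (i + 2) • b 0 • x (j - (i + 1)))
                = ∑ i ∈ Finset.range M, (b 0 / b 1) • b (i + 2) • x (j - (i + 1)) := by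
              refine Finset.sum_congr rfl fun i _ => ?_
              simp only [smul_smul]
              congr 1
              field_simp
            rw [this]
            abel
  -- Part (ii)
  have part2 : ∀ j : ℤ, ∃ f ∈ Submodule.span ℂ (Set.range κ), Q f = b 0 • x j := by
    intro j
    exact key j.toNat j (by omega)
  -- Part (iii): membership in range of P
  have keyP : ∀ n : ℕ, ∀ j : ℤ, j ≤ n → b 0 • x j ∈ LinearMap.range P := by
    by_cases hb0 : b 0 = 0
    · intro n j _
      simp [hb0]
    intro n
    induction n with
    | zero =>
        intro j hj
        rw [hx0 j (by exact_mod_cast hj)]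
        simp
    | succ n ih =>
        intro j hj
        by_cases hjn : j ≤ n
        · exact ih j hjn
        · have hj' : j = n + 1 := by omega
          have hsum := hPκ j
          rw [Finset.sum_range_succ'] at hsum
          simp only [Nat.cast_zero, sub_zero] at hsum
          have hb0x : b 0 • x j = P (κ j)
              - ∑ l ∈ Finset.range (M + 1), b (l + 1) • x (j - ((l + 1 : ℕ) : ℤ)) := by
            rw [hsum]; abel
          rw [hb0x]
          refine Submodule.sub_mem _ ⟨κ j, rfl⟩ (Submodule.sum_mem _ fun l _ => ?_)
          have : b (l + 1) • x (j - ((l + 1 : ℕ) : ℤ))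
              = (b (l + 1) / b 0) • (b 0 • x (j - ((l + 1 : ℕ) : ℤ))) := by
            rw [smul_smul, div_mul_cancel₀ _ hb0]
          rw [this]
          exact Submodule.smul_mem _ _ (ih (j - ((l + 1 : ℕ) : ℤ)) (by push_cast; omega))
  refine ⟨part1, part2, fun j => ⟨keyP (j + 1).toNat (j + 1) (by omega), ?_⟩⟩
  obtain ⟨f, _, hf⟩ := part2 (j + 1)
  exact ⟨f, hf⟩
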